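/- Fix an integer n ≥ 2, and set μ = (n−1)/n and σ² = (n−1)/n². There exists a constant κ > 0, depending only on n, such that for every integer k ≥ 1 and all integers 0 ≤ r ≤ m with m ≥ 1: 0 ≤ R_n(r+k,m+k) − R_n(r,m) ≤ 2κ/√m + (k/√m)·(μ+2)/√(8πσ²). Equivalently, the rate 1 − R_n(r,m) of the Berman code D_n(r,m) is at least the rate 1 − R_n(r+k,m+k) of D_n(r+k,m+k), and the difference is O(k/√m). -/

import Mathlib

/-- The rate `R_n(r,m)` of the dual Berman code `C_n(r,m)`; `1 − R_n(r,m)` is the rate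
of the Berman code `D_n(r,m)`. -/
noncomputable def Rrate (n r m : ℕ) : ℝ :=
  ((∑ w ∈ Finset.range (r + 1), m.choose w * (n - 1) ^ w : ℕ) : ℝ) / (n : ℝ) ^ m

namespace BermanAux

lemma sum_pascal (a m r : ℕ) :
    ∑ w ∈ Finset.range (r + 2), (m + 1).choose w * a ^ w
      = (a + 1) * ∑ w ∈ Finset.range (r + 1), m.choose w * a ^ w
        + m.choose (r + 1) * a ^ (r + 1) := by
  induction r with
  | zero => simp [Finset.sum_range_succ, Nat.choose_succ_succ]; ring
  | succ r ih =>
      rw [Finset.sum_range_succ, ih,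
        Finset.sum_range_succ (fun w => m.choose w * a ^ w) (r + 1),
        Nat.choose_succ_succ m (r + 1)]
      ring

lemma sum_le_pow (n r m : ℕ) (hn : 1 ≤ n) (h : r ≤ m) :
    (∑ w ∈ Finset.range (r + 1), m.choose w * (n - 1) ^ w) ≤ n ^ m := by
  calc (∑ w ∈ Finset.range (r + 1), m.choose w * (n - 1) ^ w)
        ≤ ∑ w ∈ Finset.range (m + 1), m.choose w * (n - 1) ^ w :=
          Finset.sum_le_sum_of_subset (Finset.range_subset_range.mpr (by omega))
      _ = ((n - 1) + 1) ^ m := by rw [add_pow]; simp [mul_comm]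
      _ = n ^ m := by congr 1; omega

lemma ratio_eq (M w n : ℕ) :
    M.choose (w + 1) * (n - 1) ^ (w + 1) * (w + 1)
      = M.choose w * (n - 1) ^ w * ((M - w) * (n - 1)) := by
  rw [pow_succ, show M.choose (w+1) * ((n-1)^w * (n-1)) * (w+1)
      = (M.choose (w+1) * (w+1)) * ((n-1)^w * (n-1)) from by ring,
    Nat.choose_succ_right_eq]
  ring

lemma t_max (n M : ℕ) (hn : 2 ≤ n) (w : ℕ) :
    M.choose w * (n - 1) ^ w
      ≤ M.choose ((M + 1) * (n - 1) / n) * (n - 1) ^ ((M + 1) * (n - 1) / n) := by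
  set a := (M + 1) * (n - 1) / n with ha
  set t : ℕ → ℕ := fun w => M.choose w * (n - 1) ^ w with ht
  have hn0 : 0 < n := by omega
  have haM : a ≤ M := by
    have h1 : (M + 1) * (n - 1) < (M + 1) * n := by
      calc (M+1) * (n-1) < (M+1) * (n-1) + (M+1) := by omega
        _ = (M+1) * n := by rw [← Nat.mul_succ]; congr 1; omega
    have : a < M + 1 := by rw [ha, Nat.div_lt_iff_lt_mul hn0]; exact h1
    omega
  have hup : ∀ w, w + 1 ≤ a → t w ≤ t (w + 1) := by
    intro w hw
    have h1 : n * a ≤ (M + 1) * (n - 1) := by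
      rw [ha, mul_comm]; exact Nat.div_mul_le_self _ _
    have hwM : w < M := by omega
    have h2 : (M + 1) * (n - 1) = (M - w) * (n - 1) + (w + 1) * (n - 1) := by
      rw [← Nat.add_mul]; congr 1; omega
    have h3 : (w + 1) * (n - 1) + (w + 1) = (w + 1) * n := by
      rw [← Nat.mul_succ]; congr 1; omega
    have key : w + 1 ≤ (M - w) * (n - 1) := by
      have h4 : n * (w + 1) ≤ n * a := Nat.mul_le_mul_left n hw
      have h5 : n * (w + 1) = (w + 1) * n := Nat.mul_comm _ _
      omega
    have step : t w * (w + 1) ≤ t (w + 1) * (w + 1) := by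
      rw [ht]; simp only []
      rw [ratio_eq M w n]
      exact Nat.mul_le_mul_left _ key
    exact Nat.le_of_mul_le_mul_right step (by omega)
  have hdown : ∀ w, a ≤ w → t (w + 1) ≤ t w := by
    intro w hw
    have key : (M - w) * (n - 1) ≤ w + 1 := by
      rcases le_or_gt M w with h | h
      · have : M - w = 0 := by omega
        simp [this]
      · have h1 : (M + 1) * (n - 1) < (w + 1) * n := by
          have h0 : a < w + 1 := by omega
          rw [ha] at h0
          exact (Nat.div_lt_iff_lt_mul hn0).mp h0
        have h2 : (M + 1) * (n - 1) = (M - w) * (n - 1) + (w + 1) * (n - 1) := by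
          rw [← Nat.add_mul]; congr 1; omega
        have h3 : (w + 1) * (n - 1) + (w + 1) = (w + 1) * n := by
          rw [← Nat.mul_succ]; congr 1; omega
        omega
    have step : t (w + 1) * (w + 1) ≤ t w * (w + 1) := by
      rw [ht]; simp only []
      rw [ratio_eq M w n]
      exact Nat.mul_le_mul_left _ key
    exact Nat.le_of_mul_le_mul_right step (by omega)
  have hle : ∀ d, t (a - d) ≤ t a := by
    intro d
    induction d with
    | zero => simp
    | succ d ih =>
        rcases le_or_gt a d with h | h
        · rw [show a - (d+1) = a - d from by omega]; exact ih
        · have h1 := hup (a - (d+1)) (by omega)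
          rw [show a - (d+1) + 1 = a - d from by omega] at h1
          exact h1.trans ih
  have hge : ∀ d, t (a + d) ≤ t a := by
    intro d
    induction d with
    | zero => simp
    | succ d ih => exact le_trans (hdown (a + d) (by omega)) ih
  rcases le_or_gt w a with h | h
  · have := hle (a - w); rwa [show a - (a - w) = w from by omega] at this
  · have := hge (w - a); rwa [show a + (w - a) = w from by omega] at this

end BermanAux

open Finset Real Stirling

namespace BermanAux2

lemma fact_upper (k : ℕ) :
    ((Nat.factorial (k + 1)) : ℝ) ≤ (Real.exp 1 / Real.sqrt 2)
      * (Real.sqrt (2 * (k + 1)) * (((k : ℝ) + 1) / Real.exp 1) ^ (k + 1)) := by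
  have hmono : stirlingSeq (k + 1) ≤ stirlingSeq 1 := stirlingSeq'_antitone (Nat.zero_le k)
  rw [stirlingSeq_one] at hmono
  have hd : (0:ℝ) < Real.sqrt (2 * (k + 1)) * (((k : ℝ) + 1) / Real.exp 1) ^ (k + 1) := by
    positivity
  have hfact : ((Nat.factorial (k + 1)) : ℝ)
      = stirlingSeq (k + 1) * (Real.sqrt (2 * (k + 1)) * (((k : ℝ) + 1) / Real.exp 1) ^ (k + 1)) := by
    rw [stirlingSeq]
    push_cast
    field_simp
  rw [hfact]
  exact mul_le_mul_of_nonneg_right hmono hd.le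

lemma fact_upper' (j : ℕ) (hj : 1 ≤ j) :
    ((Nat.factorial j) : ℝ) ≤ (Real.exp 1 / Real.sqrt 2)
      * (Real.sqrt (2 * (j : ℝ)) * ((j : ℝ) / Real.exp 1) ^ j) := by
  obtain ⟨k, rfl⟩ : ∃ k, j = k + 1 := ⟨j - 1, by omega⟩
  have h := fact_upper k
  have h1 : ((k + 1 : ℕ) : ℝ) = (k : ℝ) + 1 := by push_cast; ring
  rw [h1]
  exact h

lemma sqrt_pi_le (k : ℕ) : Real.sqrt Real.pi ≤ stirlingSeq (k + 1) := by
  have ht : Filter.Tendsto (stirlingSeq ∘ Nat.succ) Filter.atTop (nhds (Real.sqrt Real.pi)) :=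
    tendsto_stirlingSeq_sqrt_pi.comp (Filter.tendsto_add_atTop_nat 1)
  exact stirlingSeq'_antitone.le_of_tendsto ht k

lemma fact_lower' (j : ℕ) (hj : 1 ≤ j) :
    Real.sqrt Real.pi * (Real.sqrt (2 * (j : ℝ)) * ((j : ℝ) / Real.exp 1) ^ j)
      ≤ ((Nat.factorial j) : ℝ) := by
  obtain ⟨k, rfl⟩ : ∃ k, j = k + 1 := ⟨j - 1, by omega⟩
  have hd : (0:ℝ) < Real.sqrt (2 * ((k:ℝ) + 1)) * (((k : ℝ) + 1) / Real.exp 1) ^ (k + 1) := by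
    positivity
  have hfact : ((Nat.factorial (k + 1)) : ℝ)
      = stirlingSeq (k + 1) * (Real.sqrt (2 * ((k:ℝ) + 1)) * (((k : ℝ) + 1) / Real.exp 1) ^ (k + 1)) := by
    rw [stirlingSeq]
    push_cast
    field_simp
  have h1 : ((k + 1 : ℕ) : ℝ) = (k : ℝ) + 1 := by push_cast; ring
  rw [h1, hfact]
  exact mul_le_mul_of_nonneg_right (sqrt_pi_le k) hd.le

lemma geom_le (x y : ℝ) (hx : 0 < x) (hy : 0 < y) (a b : ℕ)
    (h : (a : ℝ) * (x - 1) + (b : ℝ) * (y - 1) ≤ 0) : x ^ a * y ^ b ≤ 1 := by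
  have hlog : Real.log (x ^ a * y ^ b) = (a : ℝ) * Real.log x + (b : ℝ) * Real.log y := by
    rw [Real.log_mul (by positivity) (by positivity), Real.log_pow, Real.log_pow]
  have h1 : Real.log x ≤ x - 1 := Real.log_le_sub_one_of_pos hx
  have h2 : Real.log y ≤ y - 1 := Real.log_le_sub_one_of_pos hy
  have hle : Real.log (x ^ a * y ^ b) ≤ 0 := by
    rw [hlog]
    have ha := mul_le_mul_of_nonneg_left h1 (by positivity : (0:ℝ) ≤ (a:ℝ))
    have hb := mul_le_mul_of_nonneg_left h2 (by positivity : (0:ℝ) ≤ (b:ℝ))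
    linarith
  calc x ^ a * y ^ b = Real.exp (Real.log (x ^ a * y ^ b)) :=
        (Real.exp_log (by positivity)).symm
    _ ≤ Real.exp 0 := Real.exp_le_exp.mpr hle
    _ = 1 := Real.exp_zero

lemma alg_eq (e p q N A B s2 sp s2N s2A s2B : ℝ) (he : e ≠ 0) (hA : A ≠ 0) (hB : B ≠ 0)
    (hs2 : s2 ≠ 0) (hsp : sp ≠ 0) (hs2A : s2A ≠ 0) (hs2B : s2B ≠ 0) (a b : ℕ) :
    ((e / s2) * (s2N * (N / e) ^ (a + b))) * (p ^ a * q ^ b)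
        / ((sp * (s2A * (A / e) ^ a)) * (sp * (s2B * (B / e) ^ b)))
      = (e / (s2 * (sp * sp))) * (s2N / (s2A * s2B)) * ((N * p / A) ^ a * (N * q / B) ^ b) := by
  rw [pow_add]
  simp only [div_pow, mul_pow]
  have hea : e ^ a ≠ 0 := pow_ne_zero _ he
  have heb : e ^ b ≠ 0 := pow_ne_zero _ he
  have hAa : A ^ a ≠ 0 := pow_ne_zero _ hA
  have hBb : B ^ b ≠ 0 := pow_ne_zero _ hB
  field_simp

lemma two_exp_sq_le : 2 * Real.exp 1 ^ 2 ≤ 5 * Real.pi := by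
  have he : Real.exp 1 < 2.7182818286 := Real.exp_one_lt_d9
  have hpi : 3.141592 < Real.pi := Real.pi_gt_d6
  nlinarith [Real.exp_pos 1]

end BermanAux2

namespace BermanMain

open Finset Real BermanAux BermanAux2

lemma ar_N0 (x N : ℝ) (hx : 2 ≤ x) (hN : 10 * x ^ 2 ≤ N) : 0 < N := by nlinarith

lemma ar_Apos (x N A : ℝ) (hx : 2 ≤ x) (hN : 10 * x ^ 2 ≤ N)
    (h : N * (x - 1) - x ≤ x * A) : 0 < A := by
  have hN0 : 0 < N := ar_N0 x N hx hN
  have h1 : 0 ≤ N * (x - 2) := mul_nonneg hN0.le (by linarith)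
  have h2 : 0 < x * A := by nlinarith
  by_contra hA
  push_neg at hA
  have : x * A ≤ 0 := mul_nonpos_of_nonneg_of_nonpos (by linarith) hA
  linarith

lemma ar_Bpos (x N B : ℝ) (hx : 2 ≤ x) (hN : 10 * x ^ 2 ≤ N)
    (h : N - x ≤ x * B) : 0 < B := by
  have hN0 : 0 < N := ar_N0 x N hx hN
  have h2 : 0 < x * B := by nlinarith
  by_contra hB
  push_neg at hB
  have : x * B ≤ 0 := mul_nonpos_of_nonneg_of_nonpos (by linarith) hB
  linarith

lemma ar_AB (x N A B : ℝ) (hx : 2 ≤ x) (hN : 10 * x ^ 2 ≤ N)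
    (hA : N * (x - 1) - x ≤ x * A) (hB : N - x ≤ x * B)
    (hApos : 0 < A) (hBpos : 0 < B) :
    (4 / 5) * (N ^ 2 * ((x - 1) / x ^ 2)) ≤ A * B := by
  have hx0 : (0:ℝ) < x := by linarith
  have hN0 : 0 < N := ar_N0 x N hx hN
  have hNx : 0 ≤ N - x := by nlinarith
  have key : (N * (x - 1) - x) * (N - x) ≤ (x * A) * (x * B) :=
    mul_le_mul hA hB hNx (by positivity)
  rw [show (4:ℝ) / 5 * (N ^ 2 * ((x - 1) / x ^ 2)) = 4 / 5 * N ^ 2 * (x - 1) / x ^ 2 from by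
    ring]
  rw [div_le_iff₀ (by positivity)]
  have h2 : 10 * x ^ 2 * (N * (x - 1)) ≤ N * (N * (x - 1)) :=
    mul_le_mul_of_nonneg_right hN (mul_nonneg hN0.le (by linarith))
  nlinarith [mul_pos hN0 hx0, mul_pos hx0 hx0, mul_nonneg hN0.le hx0.le,
    mul_nonneg (mul_nonneg hN0.le hx0.le) (by linarith : (0:ℝ) ≤ x - 1)]

lemma ar_final (P e p s N A B : ℝ) (hP : 0 < P) (he2 : 2 * e ^ 2 ≤ 5 * P)
    (hp : 1 / 2 ≤ p) (hs : 0 < s) (hN0 : 0 < N) (hApos : 0 < A) (hBpos : 0 < B)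
    (hAB : (4 / 5) * (N ^ 2 * s) ≤ A * B) :
    e ^ 2 * (2 * N) * (8 * P * s * N) ≤ (p + 2) ^ 2 * (2 * (P * P) * ((2 * A) * (2 * B))) := by
  have hp25 : (25:ℝ) / 4 ≤ (p + 2) ^ 2 := by nlinarith
  have h1 : (25:ℝ) / 4 * ((4 / 5) * (N ^ 2 * s)) ≤ (p + 2) ^ 2 * (A * B) :=
    mul_le_mul hp25 hAB (by positivity) (by positivity)
  have h2 : 8 * (P * P) * ((25:ℝ) / 4 * ((4 / 5) * (N ^ 2 * s))) ≤
      8 * (P * P) * ((p + 2) ^ 2 * (A * B)) :=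
    mul_le_mul_of_nonneg_left h1 (by positivity)
  have h3 : (2 * e ^ 2) * (8 * P * s * N ^ 2) ≤ (5 * P) * (8 * P * s * N ^ 2) :=
    mul_le_mul_of_nonneg_right he2 (by positivity)
  nlinarith [h2, h3]

set_option maxHeartbeats 2000000 in
lemma pmf_bound (n M w : ℕ) (hn : 2 ≤ n) (hM : 10 * n ^ 2 ≤ M) :
    ((M.choose w * (n - 1) ^ w : ℕ) : ℝ) / (n : ℝ) ^ M
      ≤ ((((n : ℝ) - 1) / (n : ℝ) + 2) /
          Real.sqrt (8 * Real.pi * (((n : ℝ) - 1) / (n : ℝ) ^ 2))) / Real.sqrt M := by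
  have hn0 : 0 < n := by omega
  have hnR : (2:ℝ) ≤ (n:ℝ) := by exact_mod_cast hn
  have hnR0 : (0:ℝ) < (n:ℝ) := by linarith
  obtain ⟨a, haM, h1, h2, hmax⟩ : ∃ a, a ≤ M ∧ n * a ≤ (M + 1) * (n - 1) ∧
      (M + 1) * (n - 1) < n * (a + 1) ∧
      M.choose w * (n - 1) ^ w ≤ M.choose a * (n - 1) ^ a := by
    refine ⟨(M + 1) * (n - 1) / n, ?_, ?_, ?_, BermanAux.t_max n M hn w⟩
    · have hlt : (M + 1) * (n - 1) < (M + 1) * n := by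
        calc (M+1) * (n-1) < (M+1) * (n-1) + (M+1) := by omega
          _ = (M+1) * n := by rw [← Nat.mul_succ]; congr 1; omega
      have : (M + 1) * (n - 1) / n < M + 1 := by rw [Nat.div_lt_iff_lt_mul hn0]; exact hlt
      omega
    · rw [mul_comm]; exact Nat.div_mul_le_self _ _
    · have hdm := Nat.div_add_mod ((M + 1) * (n - 1)) n
      have hlt := Nat.mod_lt ((M + 1) * (n - 1)) hn0
      have hmul : n * ((M + 1) * (n - 1) / n + 1) = n * ((M + 1) * (n - 1) / n) + n := by ring
      omega
  have hred : ((M.choose w * (n - 1) ^ w : ℕ) : ℝ) / (n : ℝ) ^ M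
      ≤ ((M.choose a * (n - 1) ^ a : ℕ) : ℝ) / (n : ℝ) ^ M := by
    apply div_le_div_of_nonneg_right ?_ (by positivity)
    exact_mod_cast hmax
  refine hred.trans ?_
  set b := M - a with hb
  have hab : a + b = M := by omega
  -- real quantities
  set N : ℝ := (M : ℝ) with hN'
  set A : ℝ := (a : ℝ) with hA'
  set B : ℝ := (b : ℝ) with hB'
  set p : ℝ := ((n : ℝ) - 1) / (n : ℝ) with hp'
  set q : ℝ := 1 / (n : ℝ) with hq'
  set s : ℝ := ((n : ℝ) - 1) / (n : ℝ) ^ 2 with hs'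
  have hc : ((n - 1 : ℕ) : ℝ) = (n : ℝ) - 1 := by
    rw [Nat.cast_sub (by omega : 1 ≤ n)]; simp
  have hN : 10 * (n:ℝ) ^ 2 ≤ N := by rw [hN']; exact_mod_cast hM
  have hN0 : (0:ℝ) < N := ar_N0 _ _ hnR hN
  have hABN : A + B = N := by rw [hA', hB', hN']; exact_mod_cast hab
  have h1R : (n:ℝ) * A ≤ (N + 1) * ((n:ℝ) - 1) := by
    have h1' := (Nat.cast_le (α := ℝ)).mpr h1
    push_cast [hc] at h1'
    exact h1'
  have h2R : (N + 1) * ((n:ℝ) - 1) < (n:ℝ) * (A + 1) := by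
    have h2' := (Nat.cast_lt (α := ℝ)).mpr h2
    push_cast [hc] at h2'
    exact h2'
  have hA_lb : N * ((n:ℝ) - 1) - (n:ℝ) ≤ (n:ℝ) * A := by linarith [h2R]
  have hxB : (n:ℝ) * B = (n:ℝ) * N - (n:ℝ) * A := by rw [← hABN]; ring
  have hB_lb : N - (n:ℝ) ≤ (n:ℝ) * B := by linarith [h1R, hxB]
  have hApos : (0:ℝ) < A := ar_Apos _ _ _ hnR hN hA_lb
  have hBpos : (0:ℝ) < B := ar_Bpos _ _ _ hnR hN hB_lb
  have ha1 : 1 ≤ a := by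
    rcases Nat.eq_zero_or_pos a with h | h
    · exfalso; rw [hA', h] at hApos; simp at hApos
    · omega
  have hb1 : 1 ≤ b := by
    rcases Nat.eq_zero_or_pos b with h | h
    · exfalso; rw [hB', h] at hBpos; simp at hBpos
    · omega
  have hppos : (0:ℝ) < p := by rw [hp']; apply div_pos <;> linarith
  have hqpos : (0:ℝ) < q := by rw [hq']; positivity
  have hspos : (0:ℝ) < s := by rw [hs']; exact div_pos (by linarith) (by positivity)
  have hpq1 : p + q = 1 := by rw [hp', hq']; field_simp; ring
  have hp_half : (1:ℝ)/2 ≤ p := by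
    rw [hp', le_div_iff₀ hnR0]; linarith
  have hABprod : (4/5) * (N ^ 2 * s) ≤ A * B := by
    rw [hs']
    exact ar_AB _ _ _ _ hnR hN hA_lb hB_lb hApos hBpos
  -- rewrite pmf at mode in factorial form
  have hch : (M.choose a : ℝ)
      = (Nat.factorial M : ℝ) / ((Nat.factorial a : ℝ) * (Nat.factorial b : ℝ)) := by
    rw [eq_div_iff (by positivity), ← mul_assoc]
    exact_mod_cast congrArg (Nat.cast (R := ℝ)) (Nat.choose_mul_factorial_mul_factorial haM)
  have hL1 : ((M.choose a * (n - 1) ^ a : ℕ) : ℝ) / (n : ℝ) ^ M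
      = (Nat.factorial M : ℝ) * (p ^ a * q ^ b)
        / ((Nat.factorial a : ℝ) * (Nat.factorial b : ℝ)) := by
    push_cast [hc]
    rw [hch, ← hab, pow_add, hp', hq']
    have hfa : (0:ℝ) < (Nat.factorial a : ℝ) := by positivity
    have hfb : (0:ℝ) < (Nat.factorial b : ℝ) := by positivity
    simp only [div_pow, one_pow]
    field_simp
    try ring
    try exact Or.inl trivial
  rw [hL1]
  -- Stirling bounds
  have he0 : (0:ℝ) < Real.exp 1 := Real.exp_pos 1
  have hdenpos : (0:ℝ) < (Real.sqrt Real.pi * (Real.sqrt (2 * A) * (A / Real.exp 1) ^ a))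
      * (Real.sqrt Real.pi * (Real.sqrt (2 * B) * (B / Real.exp 1) ^ b)) := by
    have := Real.pi_pos
    positivity
  have hstep1 : (Nat.factorial M : ℝ) * (p ^ a * q ^ b)
      / ((Nat.factorial a : ℝ) * (Nat.factorial b : ℝ))
      ≤ ((Real.exp 1 / Real.sqrt 2) * (Real.sqrt (2 * N) * (N / Real.exp 1) ^ M))
          * (p ^ a * q ^ b)
        / ((Real.sqrt Real.pi * (Real.sqrt (2 * A) * (A / Real.exp 1) ^ a))
          * (Real.sqrt Real.pi * (Real.sqrt (2 * B) * (B / Real.exp 1) ^ b))) := by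
    apply div_le_div₀ (by positivity)
    · apply mul_le_mul_of_nonneg_right _ (by positivity)
      have hfu := fact_upper' M (by omega)
      rw [hN']
      exact hfu
    · exact hdenpos
    · apply mul_le_mul
      · have hfl := fact_lower' a ha1; rw [hA']; exact hfl
      · have hfl := fact_lower' b hb1; rw [hB']; exact hfl
      · have := Real.pi_pos
        positivity
      · positivity
  refine hstep1.trans ?_
  have hG : (N * p / A) ^ a * (N * q / B) ^ b ≤ 1 := by
    apply geom_le _ _ (by positivity) (by positivity)
    have hcalc : (a : ℝ) * (N * p / A - 1) + (b : ℝ) * (N * q / B - 1)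
        = N * (p + q) - (A + B) := by
      rw [← hA', ← hB']
      field_simp
      ring
    rw [hcalc, hpq1, hABN]
    simp
  have hUBeq : ((Real.exp 1 / Real.sqrt 2) * (Real.sqrt (2 * N) * (N / Real.exp 1) ^ M))
          * (p ^ a * q ^ b)
        / ((Real.sqrt Real.pi * (Real.sqrt (2 * A) * (A / Real.exp 1) ^ a))
          * (Real.sqrt Real.pi * (Real.sqrt (2 * B) * (B / Real.exp 1) ^ b)))
      = (Real.exp 1 / (Real.sqrt 2 * (Real.sqrt Real.pi * Real.sqrt Real.pi)))
        * (Real.sqrt (2 * N) / (Real.sqrt (2 * A) * Real.sqrt (2 * B)))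
        * ((N * p / A) ^ a * (N * q / B) ^ b) := by
    rw [show (N / Real.exp 1) ^ M = (N / Real.exp 1) ^ (a + b) from by rw [hab]]
    exact alg_eq (Real.exp 1) p q N A B (Real.sqrt 2) (Real.sqrt Real.pi) (Real.sqrt (2*N))
      (Real.sqrt (2*A)) (Real.sqrt (2*B)) (ne_of_gt he0) (ne_of_gt hApos) (ne_of_gt hBpos)
      (by positivity) (by positivity : Real.sqrt Real.pi ≠ 0) (by positivity) (by positivity)
      a b
  rw [hUBeq]
  set V : ℝ := (Real.exp 1 / (Real.sqrt 2 * (Real.sqrt Real.pi * Real.sqrt Real.pi)))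
      * (Real.sqrt (2 * N) / (Real.sqrt (2 * A) * Real.sqrt (2 * B))) with hV'
  have hVpos : (0:ℝ) ≤ V := by
    have := Real.pi_pos
    rw [hV']
    positivity
  have hstep2 : V * ((N * p / A) ^ a * (N * q / B) ^ b) ≤ V :=
    mul_le_of_le_one_right hVpos hG
  refine hstep2.trans ?_
  -- final comparison by squaring
  set RHS : ℝ := ((p + 2) / Real.sqrt (8 * Real.pi * s)) / Real.sqrt N with hRHS'
  have hRpos : (0:ℝ) ≤ RHS := by
    rw [hRHS']
    apply div_nonneg (div_nonneg (by linarith) (Real.sqrt_nonneg _)) (Real.sqrt_nonneg _)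
  have hsq : V ^ 2 ≤ RHS ^ 2 := by
    have hV2 : V ^ 2 = (Real.exp 1 ^ 2 / (2 * (Real.pi * Real.pi)))
        * ((2 * N) / ((2 * A) * (2 * B))) := by
      rw [hV']
      simp only [mul_pow, div_pow]
      rw [Real.sq_sqrt (by norm_num : (0:ℝ) ≤ 2), Real.sq_sqrt Real.pi_pos.le,
        Real.sq_sqrt (by positivity : (0:ℝ) ≤ 2 * N),
        Real.sq_sqrt (by positivity : (0:ℝ) ≤ 2 * A),
        Real.sq_sqrt (by positivity : (0:ℝ) ≤ 2 * B)]
    have hR2 : RHS ^ 2 = ((p + 2) ^ 2 / (8 * Real.pi * s)) / N := by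
      rw [hRHS']
      simp only [div_pow]
      rw [Real.sq_sqrt (by positivity : (0:ℝ) ≤ 8 * Real.pi * s), Real.sq_sqrt hN0.le]
    rw [hV2, hR2, div_mul_div_comm, div_div, div_le_div_iff₀ (by positivity) (by positivity)]
    have := ar_final Real.pi (Real.exp 1) p s N A B Real.pi_pos two_exp_sq_le hp_half hspos
      hN0 hApos hBpos hABprod
    linarith [this]
  calc V = Real.sqrt (V ^ 2) := (Real.sqrt_sq hVpos).symm
    _ ≤ Real.sqrt (RHS ^ 2) := Real.sqrt_le_sqrt hsq
    _ = RHS := Real.sqrt_sq hRpos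

end BermanMain
namespace BermanMain

open Finset Real BermanAux BermanAux2

lemma Rrate_nonneg (n r m : ℕ) : 0 ≤ Rrate n r m := by
  unfold Rrate; positivity

lemma Rrate_le_one (n r m : ℕ) (hn : 2 ≤ n) (h : r ≤ m) : Rrate n r m ≤ 1 := by
  have hnR0 : (0:ℝ) < (n:ℝ) := by exact_mod_cast (by omega : 0 < n)
  unfold Rrate
  rw [div_le_one (by positivity)]
  calc ((∑ w ∈ Finset.range (r + 1), m.choose w * (n - 1) ^ w : ℕ) : ℝ)
      ≤ ((n ^ m : ℕ) : ℝ) := by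
        exact_mod_cast BermanAux.sum_le_pow n r m (by omega) h
    _ = (n : ℝ) ^ m := by push_cast; ring

lemma Rrate_step (n : ℕ) (hn : 2 ≤ n) (r m : ℕ) :
    Rrate n (r + 1) (m + 1)
      = Rrate n r m
        + ((m.choose (r + 1) * (n - 1) ^ (r + 1) : ℕ) : ℝ) / (n : ℝ) ^ (m + 1) := by
  have hnR0 : (0:ℝ) < (n:ℝ) := by exact_mod_cast (by omega : 0 < n)
  unfold Rrate
  have h := BermanAux.sum_pascal (n - 1) m r
  have hn1 : n - 1 + 1 = n := by omega
  rw [hn1] at h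
  rw [show r + 1 + 1 = r + 2 from rfl, h]
  push_cast
  rw [pow_succ]
  field_simp
  ring

lemma Rrate_tele (n : ℕ) (hn : 2 ≤ n) (k r m : ℕ) :
    Rrate n (r + k) (m + k) = Rrate n r m
      + ∑ i ∈ Finset.range k,
          (((m + i).choose (r + i + 1) * (n - 1) ^ (r + i + 1) : ℕ) : ℝ)
            / (n : ℝ) ^ (m + i + 1) := by
  induction k with
  | zero => simp
  | succ k ih =>
      rw [show r + (k + 1) = (r + k) + 1 from by ring,
        show m + (k + 1) = (m + k) + 1 from by ring,
        Rrate_step n hn (r + k) (m + k), ih, Finset.sum_range_succ]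
      rw [add_assoc]

end BermanMain


/-- the rate of `D_n(r,m)` is at least the rate of `D_n(r+k,m+k)`, and
the difference `R_n(r+k,m+k) − R_n(r,m)` is at most
`2κ/√m + (k/√m)(μ+2)/√(8πσ²)` where `μ = (n−1)/n` and `σ² = (n−1)/n²`. -/
theorem berman_rate_change_D (n : ℕ) (hn : 2 ≤ n) :
    ∃ κ : ℝ, 0 < κ ∧ ∀ k m r : ℕ, 1 ≤ k → 1 ≤ m → r ≤ m →
      0 ≤ Rrate n (r + k) (m + k) - Rrate n r m ∧
      Rrate n (r + k) (m + k) - Rrate n r m ≤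
        2 * κ / Real.sqrt m +
          ((k : ℝ) / Real.sqrt m) *
            ((((n : ℝ) - 1) / (n : ℝ) + 2) /
              Real.sqrt (8 * Real.pi * (((n : ℝ) - 1) / (n : ℝ) ^ 2))) := by
  have hnR0 : (0:ℝ) < (n:ℝ) := by exact_mod_cast (by omega : 0 < n)
  have hnR : (2:ℝ) ≤ (n:ℝ) := by exact_mod_cast hn
  refine ⟨Real.sqrt (10 * (n:ℝ) ^ 2), by positivity, ?_⟩
  intro k m r hk hm hrm
  set κ : ℝ := Real.sqrt (10 * (n:ℝ) ^ 2) with hκ'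
  have hκ0 : 0 < κ := by rw [hκ']; positivity
  have hmR : (1:ℝ) ≤ (m:ℝ) := by exact_mod_cast hm
  have hms : (0:ℝ) < Real.sqrt m := Real.sqrt_pos.mpr (by linarith)
  set c0 : ℝ := (((n : ℝ) - 1) / (n : ℝ) + 2) /
      Real.sqrt (8 * Real.pi * (((n : ℝ) - 1) / (n : ℝ) ^ 2)) with hc0'
  have hc0nn : 0 ≤ c0 := by
    rw [hc0']
    apply div_nonneg _ (Real.sqrt_nonneg _)
    have : (0:ℝ) ≤ ((n:ℝ) - 1) / (n:ℝ) := div_nonneg (by linarith) (by linarith)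
    linarith
  have htele := BermanMain.Rrate_tele n hn k r m
  have hsum_nonneg : 0 ≤ ∑ i ∈ Finset.range k,
      (((m + i).choose (r + i + 1) * (n - 1) ^ (r + i + 1) : ℕ) : ℝ)
        / (n : ℝ) ^ (m + i + 1) := by
    apply Finset.sum_nonneg
    intro i _
    positivity
  constructor
  · rw [htele]; linarith
  · rw [htele, add_sub_cancel_left]
    have hterm2nn : 0 ≤ ((k : ℝ) / Real.sqrt m) * c0 := by positivity
    rcases le_or_gt (10 * n ^ 2) m with hcase | hcase
    · -- large m : per-term bound
      have hterm : ∀ i ∈ Finset.range k,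
          (((m + i).choose (r + i + 1) * (n - 1) ^ (r + i + 1) : ℕ) : ℝ)
            / (n : ℝ) ^ (m + i + 1) ≤ c0 / Real.sqrt m := by
        intro i _
        have hMi : 10 * n ^ 2 ≤ m + i := by omega
        have hb := BermanMain.pmf_bound n (m + i) (r + i + 1) hn hMi
        have hstep : (((m + i).choose (r + i + 1) * (n - 1) ^ (r + i + 1) : ℕ) : ℝ)
            / (n : ℝ) ^ (m + i + 1)
            ≤ (((m + i).choose (r + i + 1) * (n - 1) ^ (r + i + 1) : ℕ) : ℝ)
            / (n : ℝ) ^ (m + i) := by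
          apply div_le_div_of_nonneg_left (by positivity) (by positivity)
          apply pow_le_pow_right₀ (by linarith) (by omega)
        refine hstep.trans (hb.trans ?_)
        rw [← hc0']
        apply div_le_div_of_nonneg_left hc0nn hms
        apply Real.sqrt_le_sqrt
        exact_mod_cast (by omega : m ≤ m + i)
      calc (∑ i ∈ Finset.range k,
            (((m + i).choose (r + i + 1) * (n - 1) ^ (r + i + 1) : ℕ) : ℝ)
              / (n : ℝ) ^ (m + i + 1))
          ≤ ∑ _i ∈ Finset.range k, c0 / Real.sqrt m := Finset.sum_le_sum hterm
        _ = (k : ℝ) * (c0 / Real.sqrt m) := by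
            rw [Finset.sum_const, Finset.card_range, nsmul_eq_mul]
        _ = ((k : ℝ) / Real.sqrt m) * c0 := by ring
        _ ≤ 2 * κ / Real.sqrt m + ((k : ℝ) / Real.sqrt m) * c0 := by
            have : 0 ≤ 2 * κ / Real.sqrt m := by positivity
            linarith
    · -- small m : crude bound by 1
      have hle1 : (∑ i ∈ Finset.range k,
          (((m + i).choose (r + i + 1) * (n - 1) ^ (r + i + 1) : ℕ) : ℝ)
            / (n : ℝ) ^ (m + i + 1)) ≤ 1 := by
        have h1 := BermanMain.Rrate_le_one n (r + k) (m + k) hn (by omega)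
        have h2 := BermanMain.Rrate_nonneg n r m
        linarith [htele]
      have hmκ : Real.sqrt m ≤ κ := by
        rw [hκ']
        apply Real.sqrt_le_sqrt
        have : (m:ℝ) ≤ ((10 * n ^ 2 : ℕ) : ℝ) := by exact_mod_cast (by omega : m ≤ 10 * n ^ 2)
        calc (m:ℝ) ≤ ((10 * n ^ 2 : ℕ) : ℝ) := this
          _ = 10 * (n:ℝ) ^ 2 := by push_cast; ring
      have h1κ : 1 ≤ 2 * κ / Real.sqrt m := by
        rw [le_div_iff₀ hms]
        linarith
      linarith
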